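/- arXiv:0909.0968 — 2 statements merged into one kernel-verified Lean document; each statement's English description precedes it below -/
import Mathlib

section
/- Let (S, 𝒲) be a set with walls and fix a basepoint p ∈ S. For x ∈ S let σ_p(x) denote the (finite) set of walls in 𝒲 separating x from p, and let f : S → ℓ²(𝒲; ℝ) be the map sending x to the characteristic function of σ_p(x). Then for all x, y ∈ S, ‖f(x) − f(y)‖² = d_𝒲(x, y); in particular, f is an isometric embedding of (S, √d_𝒲) into the real Hilbert space ℓ²(𝒲). -/
/-- A wall, represented by a subset `A ⊆ S`, separates `x` from `y` if exactly one
of `x`, `y` lies in `A`. -/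
def Wall.Separates {S : Type*} (A : Set S) (x y : S) : Prop := Xor' (x ∈ A) (y ∈ A)

/-- The wall pseudometric: the number of walls of `W` separating `x` from `y`. -/
noncomputable def wallDist {S : Type*} (W : Set (Set S)) (x y : S) : ℕ :=
  {A ∈ W | Wall.Separates A x y}.ncard

/-- The set of walls of `W` separating `x` from the basepoint `p`. -/
def wallSigma {S : Type*} (W : Set (Set S)) (p x : S) : Set (Set S) :=
  {A ∈ W | Wall.Separates A x p}

open Classical

lemma aux_finite {S : Type*} {W : Set (Set S)} {x y : S}
    (h : {A ∈ W | Wall.Separates A x y}.Finite) :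
    {A : W | Wall.Separates (A : Set S) x y}.Finite := by
  have : {A : W | Wall.Separates (A : Set S) x y}
      = Subtype.val ⁻¹' {A ∈ W | Wall.Separates A x y} := by
    ext A; simp [A.2]
  rw [this]
  exact h.preimage Subtype.val_injective.injOn


/-- Fix a basepoint `p` and let `f : S → ℓ²(𝒲; ℝ)` send `x` to the
characteristic function of `σ_p(x)` (which is square-summable since `σ_p(x)` is
finite).  Then `‖f x − f y‖² = d_𝒲(x, y)` for all `x, y`; in particular `f` is an
isometric embedding of `(S, √d_𝒲)` into the real Hilbert space `ℓ²(𝒲)`. -/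
theorem exists_isometric_embedding_into_lp_two {S : Type*} (W : Set (Set S))
    (hfin : ∀ x y : S, {A ∈ W | Wall.Separates A x y}.Finite) (p : S) :
    ∃ f : S → lp (fun _ : W => ℝ) 2,
      (∀ (x : S) (A : W), (f x : ∀ _ : W, ℝ) A =
        if (A : Set S) ∈ wallSigma W p x then 1 else 0) ∧
      (∀ x y : S, ‖f x - f y‖ ^ 2 = (wallDist W x y : ℝ)) ∧
      (∀ x y : S, ‖f x - f y‖ = Real.sqrt (wallDist W x y)) := by
  set g : S → ∀ _ : W, ℝ := fun x A => if (A : Set S) ∈ wallSigma W p x then 1 else 0 with hg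
  have hmem : ∀ x : S, Memℓp (g x) 2 := by
    intro x
    apply memℓp_gen
    have hT : {A : W | Wall.Separates (A : Set S) x p}.Finite := aux_finite (hfin x p)
    apply summable_of_ne_finset_zero (s := hT.toFinset)
    intro A hA
    have : ¬ Wall.Separates (A : Set S) x p := by simpa using hA
    simp [g, wallSigma, this]
  have hsq : ∀ x y : S, ‖(⟨g x, hmem x⟩ : lp (fun _ : W => ℝ) 2) - ⟨g y, hmem y⟩‖ ^ 2
      = (wallDist W x y : ℝ) := by
    intro x y
    have hd : ∀ A : W, ‖g x A - g y A‖ ^ (2:ℝ) =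
        if Wall.Separates (A : Set S) x y then 1 else 0 := by
      intro A
      have hxy : (Xor' (Wall.Separates (A:Set S) x p) (Wall.Separates (A:Set S) y p))
          ↔ Wall.Separates (A:Set S) x y := by
        unfold Wall.Separates Xor'
        by_cases hx : x ∈ (A:Set S) <;> by_cases hy : y ∈ (A:Set S) <;>
          by_cases hp : p ∈ (A:Set S) <;> simp [hx, hy, hp]
      simp only [g, wallSigma, Set.mem_setOf_eq, A.2, true_and]
      rw [← hxy]
      by_cases h1 : Wall.Separates (A:Set S) x p <;>
        by_cases h2 : Wall.Separates (A:Set S) y p <;>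
        simp [Xor', h1, h2, Real.rpow_natCast]
    have hT : {A : W | Wall.Separates (A : Set S) x y}.Finite := aux_finite (hfin x y)
    have hnorm : ‖(⟨g x, hmem x⟩ : lp (fun _ : W => ℝ) 2) - ⟨g y, hmem y⟩‖ ^ (2:ℝ)
        = ∑' A : W, ‖g x A - g y A‖ ^ (2:ℝ) := by
      have := lp.norm_rpow_eq_tsum (p := 2) (by norm_num)
        ((⟨g x, hmem x⟩ : lp (fun _ : W => ℝ) 2) - ⟨g y, hmem y⟩)
      simp at this ⊢
      exact this
    have htsum : ∑' A : W, ‖g x A - g y A‖ ^ (2:ℝ)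
        = ({A ∈ W | Wall.Separates A x y}.ncard : ℝ) := by
      rw [tsum_congr hd]
      rw [tsum_eq_sum (s := hT.toFinset)
        (by intro A hA; simp only [Set.Finite.mem_toFinset, Set.mem_setOf_eq] at hA; simp [hA])]
      have : ∀ A ∈ hT.toFinset, (if Wall.Separates (A : Set S) x y then (1:ℝ) else 0) = 1 := by
        intro A hA; simp only [Set.Finite.mem_toFinset, Set.mem_setOf_eq] at hA; simp [hA]
      rw [Finset.sum_congr rfl this, Finset.sum_const, nsmul_eq_mul, mul_one]
      rw [← Set.ncard_eq_toFinset_card _ hT]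
      have himg : Subtype.val '' {A : W | Wall.Separates (A : Set S) x y}
          = {A ∈ W | Wall.Separates A x y} := by
        ext B
        constructor
        · rintro ⟨A, hA, rfl⟩; exact ⟨A.2, hA⟩
        · rintro ⟨hB, hsep⟩; exact ⟨⟨B, hB⟩, hsep, rfl⟩
      rw [← himg, Set.ncard_image_of_injective _ Subtype.val_injective]
    calc ‖(⟨g x, hmem x⟩ : lp (fun _ : W => ℝ) 2) - ⟨g y, hmem y⟩‖ ^ (2:ℕ)
        = ‖(⟨g x, hmem x⟩ : lp (fun _ : W => ℝ) 2) - ⟨g y, hmem y⟩‖ ^ ((2:ℕ):ℝ) := by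
          rw [Real.rpow_natCast]
      _ = (wallDist W x y : ℝ) := by
          rw [show ((2:ℕ):ℝ) = (2:ℝ) from by norm_num, hnorm, htsum]; rfl
  refine ⟨fun x => ⟨g x, hmem x⟩, fun x A => rfl, hsq, fun x y => ?_⟩
  rw [← hsq x y, Real.sqrt_sq (norm_nonneg _)]
end

section
/- Let X be a path-connected, simply connected topological space, and let U and V be open subsets of X with U ∪ V = X such that U and V (with the subspace topology) are each nonempty, path-connected, and simply connected, and such that U ∩ V ≠ ∅. Then U ∩ V is path-connected. -/
namespace VKAux

inductive Dir | up | right | down | left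
  deriving DecidableEq

instance : Fintype Dir :=
  ⟨{Dir.up, Dir.right, Dir.down, Dir.left}, by intro x; cases x <;> simp⟩

open Dir

/-- clockwise rotation -/
def rot : Dir → Dir
  | up => Dir.right | Dir.right => down | down => Dir.left | Dir.left => up

def dvec : Dir → ℤ × ℤ
  | up => (0, 1) | Dir.right => (1, 0) | down => (0, -1) | Dir.left => (-1, 0)

variable (c : ℤ → ℤ → Bool)

/-- The cell at the "front-left" of a walker at vertex `v` moving in direction `d`. -/
def FL (v : ℤ × ℤ) : Dir → Bool
  | up => c (v.1 - 1) v.2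
  | Dir.right => c v.1 v.2
  | down => c v.1 (v.2 - 1)
  | Dir.left => c (v.1 - 1) (v.2 - 1)

/-- The directed edge starting at `t` in direction `d` is *good*: the cell on its
left is `true` and the cell on its right is `false`. -/
def good (t : ℤ × ℤ) (d : Dir) : Prop := FL c t d = true ∧ FL c t (rot d) = false

/-- Arriving at vertex `v` moving in direction `d`: back-left cell true, back-right false. -/
def arrive (v : ℤ × ℤ) (d : Dir) : Prop :=
  FL c v (rot (rot (rot d))) = true ∧ FL c v (rot (rot d)) = false

lemma rot4 (d : Dir) : rot (rot (rot (rot d))) = d := by cases d <;> rfl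

lemma good_iff_arrive (t : ℤ × ℤ) (d : Dir) : good c t d ↔ arrive c (t + dvec d) d := by
  obtain ⟨i, j⟩ := t
  cases d <;>
    simp [good, arrive, FL, dvec, rot, Prod.ext_iff, add_sub_cancel_right, sub_eq_add_neg] <;>
    norm_num

/-- Wall-follower rule: turn right if possible, else go straight, else turn left. -/
def nextDir (v : ℤ × ℤ) (d : Dir) : Dir :=
  if FL c v (rot d) then rot d else if FL c v d then d else rot (rot (rot d))

def succE (e : (ℤ × ℤ) × Dir) : (ℤ × ℤ) × Dir :=
  (e.1 + dvec e.2, nextDir c (e.1 + dvec e.2) e.2)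

lemma good_succE {e : (ℤ × ℤ) × Dir} (h : good c e.1 e.2) :
    good c (succE c e).1 (succE c e).2 := by
  obtain ⟨t, d⟩ := e
  have ha := (good_iff_arrive c t d).1 h
  set v := t + dvec d with hv
  obtain ⟨h1, h2⟩ := ha
  show good c v (nextDir c v d)
  unfold nextDir
  by_cases hB : FL c v (rot d) = true
  · rw [if_pos hB]; exact ⟨hB, h2⟩
  · rw [if_neg (by simp [hB])]
    by_cases hA : FL c v d = true
    · rw [if_pos hA]
      exact ⟨hA, by simpa using hB⟩
    · rw [if_neg (by simp [hA])]
      exact ⟨h1, by rw [rot4]; simpa using hA⟩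

lemma succE_inj {e e' : (ℤ × ℤ) × Dir} (h : good c e.1 e.2) (h' : good c e'.1 e'.2)
    (heq : succE c e = succE c e') : e = e' := by
  obtain ⟨t, d⟩ := e
  obtain ⟨t', d'⟩ := e'
  have hv : t + dvec d = t' + dvec d' := congrArg Prod.fst heq
  have ha := (good_iff_arrive c t d).1 h
  have ha' := (good_iff_arrive c t' d').1 h'
  rw [hv] at ha
  have hnd : nextDir c (t' + dvec d') d = nextDir c (t' + dvec d') d' := by
    have := congrArg Prod.snd heq
    simpa [succE, hv] using this
  set v := t' + dvec d' with hvdef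
  have hdd : d = d' := by
    obtain ⟨a1, a2⟩ := ha
    obtain ⟨b1, b2⟩ := ha'
    cases d <;> cases d' <;> (try rfl) <;>
      (exfalso; clear heq hv h h';
       simp only [rot] at a1 a2 b1 b2 hnd;
       simp only [nextDir] at hnd; simp only [rot] at hnd; simp_all)
  subst hdd
  have ht : t = t' := by
    have := hv
    exact add_right_cancel this
  rw [ht]


def walk (e₀ : (ℤ × ℤ) × Dir) : ℕ → (ℤ × ℤ) × Dir
  | 0 => e₀
  | k + 1 => succE c (walk e₀ k)

lemma walk_good {e₀ : (ℤ × ℤ) × Dir} (h : good c e₀.1 e₀.2) (k : ℕ) :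
    good c (walk c e₀ k).1 (walk c e₀ k).2 := by
  induction k with
  | zero => exact h
  | succ k ih => exact good_succE c ih

lemma walk_cancel {e₀ : (ℤ × ℤ) × Dir} (h : good c e₀.1 e₀.2) (k a b : ℕ)
    (hab : walk c e₀ (a + k) = walk c e₀ (b + k)) : walk c e₀ a = walk c e₀ b := by
  induction k with
  | zero => simpa using hab
  | succ k ih =>
    apply ih
    have ha : walk c e₀ (a + (k + 1)) = succE c (walk c e₀ (a + k)) := rfl
    have hb : walk c e₀ (b + (k + 1)) = succE c (walk c e₀ (b + k)) := rfl
    exact succE_inj c (walk_good c h _) (walk_good c h _) (by rw [← ha, ← hb, hab])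

theorem walk_reaches (n : ℤ) (hn : 1 ≤ n)
    (hL : ∀ i j : ℤ, i < 0 → c i j = true)
    (hR : ∀ i j : ℤ, n ≤ i → c i j = false)
    (hO : ∀ i j : ℤ, 0 ≤ i → i < n → (j < 0 ∨ n ≤ j) → c i j = true) :
    ∃ m, n ≤ (walk c ((n, -1), Dir.up) m).1.2 := by
  set e₀ : (ℤ × ℤ) × Dir := ((n, -1), Dir.up) with he₀
  have h₀ : good c e₀.1 e₀.2 := by
    constructor
    · show c (n - 1) (-1) = true
      exact hO _ _ (by omega) (by omega) (Or.inl (by omega))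
    · show c n (-1) = false
      exact hR _ _ le_rfl
  -- helpers
  have lt_of_true : ∀ i j : ℤ, c i j = true → i < n := by
    intro i j h
    by_contra hc
    rw [hR i j (by omega)] at h; exact absurd h (by simp)
  have nonneg_of_false : ∀ i j : ℤ, c i j = false → 0 ≤ i := by
    intro i j h
    by_contra hc
    rw [hL i j (by omega)] at h; exact absurd h (by simp)
  -- column bounds for good edges
  have hcol : ∀ t d, good c t d → 0 ≤ t.1 ∧ t.1 ≤ n := by
    rintro ⟨i, j⟩ d ⟨h1, h2⟩
    cases d <;> simp only [FL, rot] at h1 h2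
    · exact ⟨nonneg_of_false _ _ h2, by have := lt_of_true _ _ h1; omega⟩
    · exact ⟨nonneg_of_false _ _ h2, by have := lt_of_true _ _ h1; omega⟩
    · exact ⟨by have := nonneg_of_false _ _ h2; omega, by have := lt_of_true _ _ h1; omega⟩
    · exact ⟨by have := nonneg_of_false _ _ h2; omega, by have := lt_of_true _ _ h1; omega⟩
  -- a good `down` edge cannot start at height ≤ 0
  have hdown : ∀ t, good c t Dir.down → 1 ≤ t.2 := by
    rintro ⟨i, j⟩ ⟨h1, h2⟩
    simp only [FL, rot] at h1 h2
    by_contra hc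
    have hi : i < n := lt_of_true _ _ h1
    have hi0 : 0 ≤ i - 1 := nonneg_of_false _ _ h2
    have := hO (i - 1) (j - 1) (by omega) (by omega) (Or.inl (by omega))
    rw [this] at h2; exact absurd h2 (by simp)
  -- height invariant
  have hrow : ∀ k, -1 ≤ (walk c e₀ k).1.2 := by
    intro k
    induction k with
    | zero => simp [he₀, walk]
    | succ k ih =>
      have hg := walk_good c h₀ k
      have hstep : (walk c e₀ (k + 1)).1 = (walk c e₀ k).1 + dvec (walk c e₀ k).2 := rfl
      rw [hstep, Prod.snd_add]
      rcases hd : (walk c e₀ k).2 with _ | _ | _ | _ <;> rw [hd] at hg <;>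
        simp only [dvec]
      · omega
      · omega
      · have := hdown _ hg; omega
      · omega
  by_contra hcon
  push_neg at hcon
  classical
  set S := ((Finset.Icc (0 : ℤ) n ×ˢ Finset.Icc (-1 : ℤ) (n - 1)) ×ˢ
    (Finset.univ : Finset Dir)) with hS
  have hmem : ∀ k, walk c e₀ k ∈ S := by
    intro k
    have h1 := hcol _ _ (walk_good c h₀ k)
    have h2 := hrow k
    have h3 := hcon k
    simp only [hS, Finset.mem_product, Finset.mem_Icc, Finset.mem_univ, and_true]
    omega
  have key : ∀ a b : ℕ, a < b → walk c e₀ a = walk c e₀ b → False := by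
    intro a b hlt heq
    have hp : walk c e₀ 0 = walk c e₀ (b - a) := by
      apply walk_cancel c h₀ a
      have e1 : 0 + a = a := by omega
      have e2 : b - a + a = b := by omega
      rw [e1, e2]; exact heq
    obtain ⟨p, hp'⟩ : ∃ p, b - a = p + 1 := ⟨b - a - 1, by omega⟩
    rw [hp'] at hp
    have hsucc : succE c (walk c e₀ p) = e₀ := hp.symm
    set w := walk c e₀ p with hw
    have hgp : good c w.1 w.2 := walk_good c h₀ p
    have hv : w.1 + dvec w.2 = (n, -1) := congrArg Prod.fst hsucc
    have harr : arrive c (n, -1) w.2 := by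
      rw [← hv]; exact (good_iff_arrive c w.1 w.2).1 hgp
    have cUp : FL c ((n : ℤ), (-1 : ℤ)) Dir.up = true :=
      hO (n - 1) (-1) (by omega) (by omega) (Or.inl (by omega))
    have cRight : FL c ((n : ℤ), (-1 : ℤ)) Dir.right = false := hR _ _ le_rfl
    have cDown : FL c ((n : ℤ), (-1 : ℤ)) Dir.down = false := hR _ _ le_rfl
    have cLeft : FL c ((n : ℤ), (-1 : ℤ)) Dir.left = true :=
      hO (n - 1) (-1 - 1) (by omega) (by omega) (Or.inl (by omega))
    obtain ⟨a1, a2⟩ := harr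
    have hdu : w.2 = Dir.up := by
      have hall : ∀ d, arrive c ((n : ℤ), (-1 : ℤ)) d → d = Dir.up := by
        intro d hd
        obtain ⟨b1, b2⟩ := hd
        cases d <;> simp only [rot] at b1 b2
        · rfl
        · rw [cLeft] at b2; exact absurd b2 (by simp)
        · rw [cRight] at b1; exact absurd b1 (by simp)
        · rw [cDown] at b1; exact absurd b1 (by simp)
      exact hall w.2 ⟨a1, a2⟩
    have hw2 : w.1.2 = -2 := by
      rw [hdu] at hv
      have := congrArg Prod.snd hv
      simp only [Prod.snd_add, dvec] at this
      omega
    have := hrow p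
    rw [← hw] at this
    omega
  obtain ⟨a, b, hab, hfab⟩ :=
    Finite.exists_ne_map_eq_of_infinite (fun k => (⟨walk c e₀ k, hmem k⟩ : {x // x ∈ S}))
  have heq : walk c e₀ a = walk c e₀ b := congrArg Subtype.val hfab
  rcases hab.lt_or_gt with h | h
  · exact key a b h heq
  · exact key b a h heq.symm

end VKAux

section Main

open VKAux in
set_option maxHeartbeats 1000000 in
/-- If a path-connected, simply connected space `X` is the union of
two open, nonempty, path-connected, simply connected subsets `U`, `V` with
`U ∩ V ≠ ∅`, then `U ∩ V` is path-connected. -/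
theorem isPathConnected_inter_of_simplyConnected
    {X : Type*} [TopologicalSpace X] [PathConnectedSpace X] [SimplyConnectedSpace X]
    (U V : Set X) (hUopen : IsOpen U) (hVopen : IsOpen V)
    (hUV : U ∪ V = Set.univ)
    (hUne : U.Nonempty) (hVne : V.Nonempty)
    (hUpc : IsPathConnected U) (hVpc : IsPathConnected V)
    (hUsc : SimplyConnectedSpace U) (hVsc : SimplyConnectedSpace V)
    (hint : (U ∩ V).Nonempty) :
    IsPathConnected (U ∩ V) := by
  classical
  obtain ⟨x0, hx0⟩ := hint
  refine ⟨x0, hx0, @fun y hy => ?_⟩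
  obtain ⟨a, ha⟩ := hUpc.joinedIn x0 hx0.1 y hy.1
  obtain ⟨b, hb⟩ := hVpc.joinedIn x0 hx0.2 y hy.2
  obtain ⟨H⟩ := SimplyConnectedSpace.paths_homotopic a b
  set G : ℝ × ℝ → X := fun p =>
    H (Set.projIcc 0 1 zero_le_one p.1, Set.projIcc 0 1 zero_le_one p.2) with hGdef
  have hGcont : Continuous G := by
    apply H.continuous.comp
    exact (continuous_projIcc.comp continuous_fst).prodMk
      (continuous_projIcc.comp continuous_snd)
  have hGbot : ∀ s t : ℝ, t ≤ 0 → G (s, t) = x0 := by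
    intro s t ht
    show H (_, Set.projIcc 0 1 zero_le_one t) = x0
    rw [Set.projIcc_of_le_left _ ht]
    have h1 : H (Set.projIcc 0 1 zero_le_one s, (0 : unitInterval)) = a 0 :=
      H.eq_fst _ (by left; rfl)
    rw [show (⟨0, Set.left_mem_Icc.2 zero_le_one⟩ : unitInterval) = (0 : unitInterval) from rfl,
      h1, a.source]
  have hGtop : ∀ s t : ℝ, 1 ≤ t → G (s, t) = y := by
    intro s t ht
    show H (_, Set.projIcc 0 1 zero_le_one t) = y
    rw [Set.projIcc_of_right_le _ ht]
    have h1 : H (Set.projIcc 0 1 zero_le_one s, (1 : unitInterval)) = a 1 :=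
      H.eq_fst _ (by right; rfl)
    rw [show (⟨1, Set.right_mem_Icc.2 zero_le_one⟩ : unitInterval) = (1 : unitInterval) from rfl,
      h1, a.target]
  have hGleft : ∀ s t : ℝ, s ≤ 0 → G (s, t) ∈ U := by
    intro s t hs
    show H (Set.projIcc 0 1 zero_le_one s, _) ∈ U
    rw [Set.projIcc_of_le_left _ hs]
    rw [show (⟨0, Set.left_mem_Icc.2 zero_le_one⟩ : unitInterval) = (0 : unitInterval) from rfl]
    rw [H.apply_zero]
    exact ha _
  have hGright : ∀ s t : ℝ, 1 ≤ s → G (s, t) ∈ V := by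
    intro s t hs
    show H (Set.projIcc 0 1 zero_le_one s, _) ∈ V
    rw [Set.projIcc_of_right_le _ hs]
    rw [show (⟨1, Set.right_mem_Icc.2 zero_le_one⟩ : unitInterval) = (1 : unitInterval) from rfl]
    rw [H.apply_one]
    exact hb _
  -- Lebesgue number for the cover G⁻¹U, G⁻¹V of the unit square
  obtain ⟨δ, hδ, hleb⟩ := lebesgue_number_lemma_of_metric
    (s := Set.Icc (0:ℝ) 1 ×ˢ Set.Icc (0:ℝ) 1)
    (c := fun b : Bool => if b then G ⁻¹' U else G ⁻¹' V)
    (isCompact_Icc.prod isCompact_Icc)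
    (by rintro (_ | _) <;> simp <;> [exact hVopen.preimage hGcont; exact hUopen.preimage hGcont])
    (by
      intro p _
      have hp : G p ∈ U ∪ V := by rw [hUV]; trivial
      rcases hp with h | h
      · exact Set.mem_iUnion.2 ⟨true, by simpa using h⟩
      · exact Set.mem_iUnion.2 ⟨false, by simpa using h⟩)
  obtain ⟨n0, hn0⟩ := exists_nat_one_div_lt hδ
  set n : ℕ := n0 + 1 with hn
  have hnpos : (0 : ℝ) < n := by positivity
  have hnδ : 1 / (n : ℝ) < δ := by exact_mod_cast hn0
  -- dichotomy for in-range cells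
  have hdi : ∀ i j : ℤ, 0 ≤ i → i < (n : ℤ) → 0 ≤ j → j < (n : ℤ) →
      (∀ s t : ℝ, (i:ℝ)/n ≤ s → s ≤ ((i:ℝ)+1)/n → (j:ℝ)/n ≤ t → t ≤ ((j:ℝ)+1)/n →
        G (s, t) ∈ U) ∨
      (∀ s t : ℝ, (i:ℝ)/n ≤ s → s ≤ ((i:ℝ)+1)/n → (j:ℝ)/n ≤ t → t ≤ ((j:ℝ)+1)/n →
        G (s, t) ∈ V) := by
    intro i j hi0 hin hj0 hjn
    have hi0' : (0:ℝ) ≤ (i:ℝ) := by exact_mod_cast hi0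
    have hin' : (i:ℝ) ≤ (n:ℝ) := by exact_mod_cast hin.le
    have hj0' : (0:ℝ) ≤ (j:ℝ) := by exact_mod_cast hj0
    have hjn' : (j:ℝ) ≤ (n:ℝ) := by exact_mod_cast hjn.le
    have hcorner : ((i:ℝ)/n, (j:ℝ)/n) ∈ Set.Icc (0:ℝ) 1 ×ˢ Set.Icc (0:ℝ) 1 := by
      constructor <;> constructor
      · positivity
      · rw [div_le_one hnpos]; exact hin'
      · positivity
      · rw [div_le_one hnpos]; exact hjn'
    obtain ⟨bb, hbb⟩ := hleb _ hcorner
    have hsub : ∀ s t : ℝ, (i:ℝ)/n ≤ s → s ≤ ((i:ℝ)+1)/n → (j:ℝ)/n ≤ t →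
        t ≤ ((j:ℝ)+1)/n → (s, t) ∈ Metric.ball ((i:ℝ)/n, (j:ℝ)/n) δ := by
      intro s t h1 h2 h3 h4
      have hadd : ((i:ℝ)+1)/n = (i:ℝ)/n + 1/n := add_div _ _ _
      have hadd' : ((j:ℝ)+1)/n = (j:ℝ)/n + 1/n := add_div _ _ _
      rw [Metric.mem_ball, Prod.dist_eq]
      apply max_lt
      · rw [Real.dist_eq, abs_lt]; constructor <;> nlinarith
      · rw [Real.dist_eq, abs_lt]; constructor <;> nlinarith
    cases bb' : bb
    · right
      intro s t h1 h2 h3 h4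
      have := hbb (hsub s t h1 h2 h3 h4)
      rw [bb'] at this
      simpa using this
    · left
      intro s t h1 h2 h3 h4
      have := hbb (hsub s t h1 h2 h3 h4)
      rw [bb'] at this
      simpa using this
  -- coloring of cells
  set col : ℤ → ℤ → Bool := fun i j =>
    if i < 0 then true
    else if (n : ℤ) ≤ i then false
    else if (∀ s t : ℝ, (i:ℝ)/n ≤ s → s ≤ ((i:ℝ)+1)/n → (j:ℝ)/n ≤ t → t ≤ ((j:ℝ)+1)/n →
        G (s, t) ∈ U) then true else false with hcol
  have hcolU : ∀ i j : ℤ, col i j = true →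
      ∀ s t : ℝ, (i:ℝ)/n ≤ s → s ≤ ((i:ℝ)+1)/n → (j:ℝ)/n ≤ t → t ≤ ((j:ℝ)+1)/n →
        G (s, t) ∈ U := by
    intro i j hc s t h1 h2 h3 h4
    by_cases hi : i < 0
    · apply hGleft
      have : ((i:ℝ)+1) ≤ 0 := by exact_mod_cast (by omega : i + 1 ≤ 0)
      have h5 : ((i:ℝ)+1)/n ≤ 0 := div_nonpos_iff.2 (Or.inr ⟨this, hnpos.le⟩)
      linarith
    · by_cases hi2 : (n : ℤ) ≤ i
      · simp [hcol, hi, hi2] at hc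
      · have hP : (∀ s t : ℝ, (i:ℝ)/n ≤ s → s ≤ ((i:ℝ)+1)/n → (j:ℝ)/n ≤ t →
            t ≤ ((j:ℝ)+1)/n → G (s, t) ∈ U) := by
          by_contra hP
          simp only [hcol, if_neg hi, if_neg hi2, if_neg hP] at hc
          exact absurd hc (by simp)
        exact hP s t h1 h2 h3 h4
  have hcolV : ∀ i j : ℤ, col i j = false →
      ∀ s t : ℝ, (i:ℝ)/n ≤ s → s ≤ ((i:ℝ)+1)/n → (j:ℝ)/n ≤ t → t ≤ ((j:ℝ)+1)/n →
        G (s, t) ∈ V := by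
    intro i j hc s t h1 h2 h3 h4
    by_cases hi : i < 0
    · simp [hcol, hi] at hc
    · by_cases hi2 : (n : ℤ) ≤ i
      · apply hGright
        have : (n:ℝ) ≤ (i:ℝ) := by exact_mod_cast hi2
        have h5 : (1:ℝ) ≤ (i:ℝ)/n := (one_le_div hnpos).2 this
        linarith
      · have hP : ¬ (∀ s t : ℝ, (i:ℝ)/n ≤ s → s ≤ ((i:ℝ)+1)/n → (j:ℝ)/n ≤ t →
            t ≤ ((j:ℝ)+1)/n → G (s, t) ∈ U) := by
          intro hP
          simp only [hcol, if_neg hi, if_neg hi2, if_pos hP] at hc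
          exact absurd hc (by simp)
        by_cases hj : 0 ≤ j ∧ j < (n:ℤ)
        · rcases hdi i j (by omega) (by omega) hj.1 hj.2 with hU' | hV'
          · exact absurd hU' hP
          · exact hV' s t h1 h2 h3 h4
        · exfalso
          apply hP
          intro s' t' g1 g2 g3 g4
          rcases (by omega : j < 0 ∨ (n:ℤ) ≤ j) with hj' | hj'
          · have : ((j:ℝ)+1) ≤ 0 := by exact_mod_cast (by omega : j + 1 ≤ 0)
            have h5 : ((j:ℝ)+1)/n ≤ 0 := div_nonpos_iff.2 (Or.inr ⟨this, hnpos.le⟩)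
            rw [hGbot s' t' (by linarith)]
            exact hx0.1
          · have : (n:ℝ) ≤ (j:ℝ) := by exact_mod_cast hj'
            have h5 : (1:ℝ) ≤ (j:ℝ)/n := (one_le_div hnpos).2 this
            rw [hGtop s' t' (by linarith)]
            exact hy.1
  have hL' : ∀ i j : ℤ, i < 0 → col i j = true := by
    intro i j h; simp [hcol, h]
  have hR' : ∀ i j : ℤ, (n:ℤ) ≤ i → col i j = false := by
    intro i j h
    have : ¬ i < 0 := by omega
    simp [hcol, this, h]
  have hO' : ∀ i j : ℤ, 0 ≤ i → i < (n:ℤ) → (j < 0 ∨ (n:ℤ) ≤ j) → col i j = true := by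
    intro i j hi0 hin hj
    have h1 : ¬ i < 0 := by omega
    have h2 : ¬ (n:ℤ) ≤ i := by omega
    have hP : (∀ s t : ℝ, (i:ℝ)/n ≤ s → s ≤ ((i:ℝ)+1)/n → (j:ℝ)/n ≤ t →
        t ≤ ((j:ℝ)+1)/n → G (s, t) ∈ U) := by
      intro s' t' g1 g2 g3 g4
      rcases hj with hj' | hj'
      · have : ((j:ℝ)+1) ≤ 0 := by exact_mod_cast (by omega : j + 1 ≤ 0)
        have h5 : ((j:ℝ)+1)/n ≤ 0 := div_nonpos_iff.2 (Or.inr ⟨this, hnpos.le⟩)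
        rw [hGbot s' t' (by linarith)]
        exact hx0.1
      · have : (n:ℝ) ≤ (j:ℝ) := by exact_mod_cast hj'
        have h5 : (1:ℝ) ≤ (j:ℝ)/n := (one_le_div hnpos).2 this
        rw [hGtop s' t' (by linarith)]
        exact hy.1
    simp only [hcol, if_neg h1, if_neg h2, if_pos hP]
  -- joining along segments
  have hseg : ∀ (f : ℝ → X) (p q : ℝ), Continuous f → p ≤ q →
      (∀ u, p ≤ u → u ≤ q → f u ∈ U ∩ V) → JoinedIn (U ∩ V) (f p) (f q) := by
    intro f p q hf hpq hmem
    refine ⟨⟨⟨fun t => f (p + (q - p) * (t : ℝ)),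
      hf.comp (continuous_const.add (continuous_const.mul continuous_subtype_val))⟩,
      ?_, ?_⟩, ?_⟩
    · exact congrArg f (by rw [show ((0 : unitInterval) : ℝ) = 0 from rfl]; ring)
    · exact congrArg f (by rw [show ((1 : unitInterval) : ℝ) = 1 from rfl]; ring)
    · intro t
      exact hmem _ (by nlinarith [t.2.1, t.2.2]) (by nlinarith [t.2.1, t.2.2])
  set vtx : ℤ × ℤ → X := fun t => G ((t.1 : ℝ)/n, (t.2 : ℝ)/n) with hvtx
  have hmono : ∀ i : ℤ, (i:ℝ)/n ≤ ((i:ℝ)+1)/n := by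
    intro i
    apply (div_le_div_iff_of_pos_right hnpos).2
    linarith
  have segV : ∀ i j : ℤ, col (i-1) j ≠ col i j →
      JoinedIn (U ∩ V) (vtx (i, j)) (vtx (i, j+1)) := by
    intro i j hne
    have e1 : vtx (i, j) = G ((i:ℝ)/n, (j:ℝ)/n) := rfl
    have e2 : vtx (i, j+1) = G ((i:ℝ)/n, ((j:ℝ)+1)/n) := by
      show G ((i:ℝ)/n, ((j+1 : ℤ):ℝ)/n) = _
      push_cast
      rfl
    rw [e1, e2]
    have hmem : ∀ u : ℝ, (j:ℝ)/n ≤ u → u ≤ ((j:ℝ)+1)/n → G ((i:ℝ)/n, u) ∈ U ∩ V := by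
      intro u hu1 hu2
      have hs1 : ((i-1:ℤ):ℝ)/n ≤ (i:ℝ)/n := by
        apply (div_le_div_iff_of_pos_right hnpos).2; push_cast; linarith
      have hs2 : (i:ℝ)/n ≤ (((i-1:ℤ):ℝ)+1)/n := by
        apply (div_le_div_iff_of_pos_right hnpos).2; push_cast; linarith
      have hs3 : (i:ℝ)/n ≤ ((i:ℝ)+1)/n := hmono i
      cases hc : col (i-1) j
      · have hc2 : col i j = true := by
          cases hc2 : col i j
          · rw [hc, hc2] at hne; exact absurd rfl hne
          · rfl
        exact ⟨hcolU i j hc2 _ u le_rfl hs3 hu1 hu2,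
               hcolV (i-1) j hc _ u hs1 hs2 hu1 hu2⟩
      · have hc2 : col i j = false := by
          cases hc2 : col i j
          · rfl
          · rw [hc, hc2] at hne; exact absurd rfl hne
        exact ⟨hcolU (i-1) j hc _ u hs1 hs2 hu1 hu2,
               hcolV i j hc2 _ u le_rfl hs3 hu1 hu2⟩
    exact hseg (fun u => G ((i:ℝ)/n, u)) ((j:ℝ)/n) (((j:ℝ)+1)/n)
      (hGcont.comp (continuous_const.prodMk continuous_id)) (hmono j)
      (fun u h1 h2 => hmem u h1 h2)
  have segH : ∀ i j : ℤ, col i (j-1) ≠ col i j →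
      JoinedIn (U ∩ V) (vtx (i, j)) (vtx (i+1, j)) := by
    intro i j hne
    have e1 : vtx (i, j) = G ((i:ℝ)/n, (j:ℝ)/n) := rfl
    have e2 : vtx (i+1, j) = G (((i:ℝ)+1)/n, (j:ℝ)/n) := by
      show G (((i+1 : ℤ):ℝ)/n, (j:ℝ)/n) = _
      push_cast
      rfl
    rw [e1, e2]
    have hmem : ∀ u : ℝ, (i:ℝ)/n ≤ u → u ≤ ((i:ℝ)+1)/n → G (u, (j:ℝ)/n) ∈ U ∩ V := by
      intro u hu1 hu2
      have hs1 : ((j-1:ℤ):ℝ)/n ≤ (j:ℝ)/n := by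
        apply (div_le_div_iff_of_pos_right hnpos).2; push_cast; linarith
      have hs2 : (j:ℝ)/n ≤ (((j-1:ℤ):ℝ)+1)/n := by
        apply (div_le_div_iff_of_pos_right hnpos).2; push_cast; linarith
      have hs3 : (j:ℝ)/n ≤ ((j:ℝ)+1)/n := hmono j
      cases hc : col i (j-1)
      · have hc2 : col i j = true := by
          cases hc2 : col i j
          · rw [hc, hc2] at hne; exact absurd rfl hne
          · rfl
        exact ⟨hcolU i j hc2 u _ hu1 hu2 le_rfl hs3,
               hcolV i (j-1) hc u _ hu1 hu2 hs1 hs2⟩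
      · have hc2 : col i j = false := by
          cases hc2 : col i j
          · rfl
          · rw [hc, hc2] at hne; exact absurd rfl hne
        exact ⟨hcolU i (j-1) hc u _ hu1 hu2 hs1 hs2,
               hcolV i j hc2 u _ hu1 hu2 le_rfl hs3⟩
    exact hseg (fun u => G (u, (j:ℝ)/n)) ((i:ℝ)/n) (((i:ℝ)+1)/n)
      (hGcont.comp (continuous_id.prodMk continuous_const)) (hmono i)
      (fun u h1 h2 => hmem u h1 h2)
  -- traversing a good edge
  have hedge : ∀ (t : ℤ × ℤ) (d : Dir), VKAux.good col t d →
      JoinedIn (U ∩ V) (vtx t) (vtx (t + VKAux.dvec d)) := by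
    rintro ⟨i, j⟩ d ⟨h1, h2⟩
    cases d <;> simp only [VKAux.FL, VKAux.rot] at h1 h2
    · have he : ((i,j) : ℤ × ℤ) + VKAux.dvec Dir.up = (i, j+1) := by
        simp [VKAux.dvec]
      rw [he]
      exact segV i j (by rw [h1, h2]; simp)
    · have he : ((i,j) : ℤ × ℤ) + VKAux.dvec Dir.right = (i+1, j) := by
        simp [VKAux.dvec]
      rw [he]
      exact segH i j (by rw [h1, h2]; simp)
    · have he : ((i,j) : ℤ × ℤ) + VKAux.dvec Dir.down = (i, j-1) := by
        simp [VKAux.dvec]; ring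
      rw [he]
      have := segV i (j-1) (by rw [h1, h2]; simp)
      rw [show (j-1)+1 = j by ring] at this
      exact this.symm
    · have he : ((i,j) : ℤ × ℤ) + VKAux.dvec Dir.left = (i-1, j) := by
        simp [VKAux.dvec]; ring
      rw [he]
      have := segH (i-1) j (by rw [h1, h2]; simp)
      rw [show (i-1)+1 = i by ring] at this
      exact this.symm
  -- the walk
  have hnz : (1 : ℤ) ≤ (n : ℤ) := by exact_mod_cast (by omega : 1 ≤ n)
  set e₀ : (ℤ × ℤ) × Dir := (((n:ℤ), -1), Dir.up) with he₀
  have h₀ : VKAux.good col e₀.1 e₀.2 := by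
    constructor
    · show col ((n:ℤ) - 1) (-1) = true
      exact hO' _ _ (by omega) (by omega) (Or.inl (by omega))
    · show col (n:ℤ) (-1) = false
      exact hR' _ _ le_rfl
  obtain ⟨m, hm⟩ := VKAux.walk_reaches col (n:ℤ) hnz hL' hR' hO'
  have hchain : ∀ k, JoinedIn (U ∩ V) x0 (vtx (VKAux.walk col e₀ k).1) := by
    intro k
    induction k with
    | zero =>
      have hv0 : vtx (((n:ℤ), -1)) = x0 := by
        apply hGbot
        rw [show (((-1:ℤ)):ℝ) = -1 by norm_num]
        have : (0:ℝ) ≤ 1/(n:ℝ) := by positivity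
        rw [div_eq_mul_inv]
        nlinarith [inv_nonneg.2 hnpos.le]
      show JoinedIn (U ∩ V) x0 (vtx (((n:ℤ), -1)))
      rw [hv0]
      exact JoinedIn.refl hx0
    | succ k ih =>
      have hg := VKAux.walk_good col h₀ k
      have hstep : (VKAux.walk col e₀ (k+1)).1 =
          (VKAux.walk col e₀ k).1 + VKAux.dvec (VKAux.walk col e₀ k).2 := rfl
      rw [hstep]
      exact ih.trans (hedge _ _ hg)
  have hfin := hchain m
  have hval : vtx (VKAux.walk col e₀ m).1 = y := by
    apply hGtop
    have hj : ((n:ℤ):ℝ) ≤ (((VKAux.walk col e₀ m).1.2 : ℤ) : ℝ) := by exact_mod_cast hm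
    have : (1:ℝ) ≤ ((VKAux.walk col e₀ m).1.2 : ℝ)/n := by
      apply (one_le_div hnpos).2
      exact_mod_cast hj
    exact this
  rw [hval] at hfin
  exact hfin

end Main
end
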